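/- Let v > 0, j ∈ ℝ, let α : (0,∞) → ℝ be twice differentiable with α(1/v) > 0, and let ε_vv, ε_vη, ε_ηη ∈ ℝ. Consider the symmetric 4×4 matrix M with rows: (1, 0, 0, 0); (0, ε_ηη, 0, ε_vη); (0, 0, α(1/v)/v, −j(α'(1/v) + v·α(1/v))/v²); (0, ε_vη, −j(α'(1/v) + v·α(1/v))/v², ε_vv + (j²/(2v³))·(α''(1/v) + 4v·α'(1/v) + 2v²·α(1/v))). If ε_ηη > 0 and (α(1/v)·α''(1/v) − 2α'(1/v)²)·(j²/(2v³))·ε_ηη + α(1/v)·(ε_vv·ε_ηη − ε_vη²) > 0, then M is positive definite. -/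

import Mathlib

lemma key_aux (v j a b c εvv εvη εηη x0 x1 x2 x3 : ℝ) (hv : 0 < v) (ha : 0 < a)
    (hεηη : 0 < εηη)
    (hdet : 0 < (a * c - 2 * b ^ 2) * (j ^ 2 / (2 * v ^ 3)) * εηη + a * (εvv * εηη - εvη ^ 2))
    (hx : x0 ≠ 0 ∨ x1 ≠ 0 ∨ x2 ≠ 0 ∨ x3 ≠ 0) :
    0 < x0 * x0 + x1 * (εηη * x1 + εvη * x3)
      + x2 * ((a / v) * x2 + (-j * (b + v * a) / v ^ 2) * x3)
      + x3 * (εvη * x1 + (-j * (b + v * a) / v ^ 2) * x2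
          + (εvv + (j ^ 2 / (2 * v ^ 3)) * (c + 4 * v * b + 2 * v ^ 2 * a)) * x3) := by
  obtain ⟨K, hK⟩ : ∃ K : ℝ, K = εvv - εvη ^ 2 / εηη + j ^ 2 * (a * c - 2 * b ^ 2) / (2 * v ^ 3 * a) :=
    ⟨_, rfl⟩
  have h1 : 0 < a * εηη := mul_pos ha hεηη
  have h2 : K * (a * εηη) = (a * c - 2 * b ^ 2) * (j ^ 2 / (2 * v ^ 3)) * εηη
      + a * (εvv * εηη - εvη ^ 2) := by
    rw [hK]; field_simp; ring
  have h3 : 0 < K * (a * εηη) := by rw [h2]; exact hdet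
  have hKpos : 0 < K := by
    by_contra hc
    push_neg at hc
    nlinarith
  have hQ : x0 * x0 + x1 * (εηη * x1 + εvη * x3)
      + x2 * ((a / v) * x2 + (-j * (b + v * a) / v ^ 2) * x3)
      + x3 * (εvη * x1 + (-j * (b + v * a) / v ^ 2) * x2
          + (εvv + (j ^ 2 / (2 * v ^ 3)) * (c + 4 * v * b + 2 * v ^ 2 * a)) * x3)
      = x0 ^ 2 + (εηη * x1 + εvη * x3) ^ 2 / εηη
        + (a * v * x2 - j * (b + v * a) * x3) ^ 2 / (a * v ^ 3)
        + K * x3 ^ 2 := by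
    rw [hK]
    field_simp
    ring
  rw [hQ]
  have hav : 0 < a * v ^ 3 := by positivity
  have t0 : 0 ≤ x0 ^ 2 := sq_nonneg x0
  have t1 : 0 ≤ (εηη * x1 + εvη * x3) ^ 2 / εηη := by positivity
  have t2 : 0 ≤ (a * v * x2 - j * (b + v * a) * x3) ^ 2 / (a * v ^ 3) := by positivity
  have t3 : 0 ≤ K * x3 ^ 2 := by positivity
  rcases hx with h | h | h | h
  · have : 0 < x0 ^ 2 := lt_of_le_of_ne t0 (Ne.symm (pow_ne_zero 2 h))
    linarith
  · rcases eq_or_ne x3 0 with h3' | h3'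
    · have hne : εηη * x1 + εvη * x3 ≠ 0 := by
        rw [h3']; simpa using mul_ne_zero (ne_of_gt hεηη) h
      have : 0 < (εηη * x1 + εvη * x3) ^ 2 / εηη :=
        div_pos (lt_of_le_of_ne (sq_nonneg _) (Ne.symm (pow_ne_zero 2 hne))) hεηη
      linarith
    · have : 0 < K * x3 ^ 2 :=
        mul_pos hKpos (lt_of_le_of_ne (sq_nonneg _) (Ne.symm (pow_ne_zero 2 h3')))
      linarith
  · rcases eq_or_ne x3 0 with h3' | h3'
    · have hne : a * v * x2 - j * (b + v * a) * x3 ≠ 0 := by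
        rw [h3']; simpa using mul_ne_zero (mul_ne_zero (ne_of_gt ha) (ne_of_gt hv)) h
      have : 0 < (a * v * x2 - j * (b + v * a) * x3) ^ 2 / (a * v ^ 3) :=
        div_pos (lt_of_le_of_ne (sq_nonneg _) (Ne.symm (pow_ne_zero 2 hne))) hav
      linarith
    · have : 0 < K * x3 ^ 2 :=
        mul_pos hKpos (lt_of_le_of_ne (sq_nonneg _) (Ne.symm (pow_ne_zero 2 h3')))
      linarith
  · have : 0 < K * x3 ^ 2 :=
      mul_pos hKpos (lt_of_le_of_ne (sq_nonneg _) (Ne.symm (pow_ne_zero 2 h)))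
    linarith


/-- Positive definiteness of the Hessian of the specific total energy
`e(u, vj, η, v) = u²/2 + (α(1/v)/(2v))(vj)² + ε(v,η)` in the variables `(u, vj, η, v)`,
under the Sylvester conditions `ε_ηη > 0` and
`(α α'' − 2α'²)(j²/(2v³))ε_ηη + α (ε_vv ε_ηη − ε_vη²) > 0` (evaluated at `1/v`). -/
theorem stmt_2 (v j εvv εvη εηη : ℝ) (hv : 0 < v)
    (α α' α'' : ℝ → ℝ)
    (hα' : ∀ x ∈ Set.Ioi (0 : ℝ), HasDerivAt α (α' x) x)
    (hα'' : ∀ x ∈ Set.Ioi (0 : ℝ), HasDerivAt α' (α'' x) x)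
    (hαpos : 0 < α (1 / v))
    (hεηη : 0 < εηη)
    (hdet : 0 < (α (1 / v) * α'' (1 / v) - 2 * (α' (1 / v)) ^ 2) * (j ^ 2 / (2 * v ^ 3)) * εηη
      + α (1 / v) * (εvv * εηη - εvη ^ 2)) :
    (!![1, 0, 0, 0;
        0, εηη, 0, εvη;
        0, 0, α (1 / v) / v, -j * (α' (1 / v) + v * α (1 / v)) / v ^ 2;
        0, εvη, -j * (α' (1 / v) + v * α (1 / v)) / v ^ 2,
          εvv + (j ^ 2 / (2 * v ^ 3)) *
            (α'' (1 / v) + 4 * v * α' (1 / v) + 2 * v ^ 2 * α (1 / v))] :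
      Matrix (Fin 4) (Fin 4) ℝ).PosDef := by
  constructor
  · ext i k
    fin_cases i <;> fin_cases k <;> simp [Matrix.conjTranspose_apply, Matrix.vecHead, Matrix.vecTail]
  · intro x hx
    have hx' : x 0 ≠ 0 ∨ x 1 ≠ 0 ∨ x 2 ≠ 0 ∨ x 3 ≠ 0 := by
      by_contra hc
      push_neg at hc
      apply hx
      ext i
      fin_cases i <;> simp [hc.1, hc.2.1, hc.2.2.1, hc.2.2.2]
    have := key_aux v j (α (1/v)) (α' (1/v)) (α'' (1/v)) εvv εvη εηη
      (x 0) (x 1) (x 2) (x 3) hv hαpos hεηη hdet hx'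
    simp only [dotProduct, Matrix.mulVec, Fin.sum_univ_four, star, id]
    simp [dotProduct, Matrix.mulVec, Fin.sum_univ_four, Matrix.vecHead, Matrix.vecTail]
    convert this using 1
    rfl
    simp [Finsupp.sum_fintype, Fin.sum_univ_four, Matrix.vecHead, Matrix.vecTail]
    ring
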